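/- For two players where Alice's measure is uniform on [0,1] and Bob's measure is uniform on [1/2 - δ, 1/2 + δ], the only envy-free complete connected division cuts at the point 1/2, giving utilitarian welfare exactly 1. -/

import Mathlib

open MeasureTheory Set
open scoped ENNReal

/-- A connected division of the cake `[0,1]` among `n` players: each player gets an
open interval, the intervals are pairwise disjoint and contained in `[0,1]`. -/
structure ConnDiv (n : ℕ) where
  pieces : Fin n → Set ℝ
  isInterval : ∀ i, ∃ a b : ℝ, pieces i = Set.Ioo a b
  subset : ∀ i, pieces i ⊆ Set.Icc (0:ℝ) 1
  disj : Pairwise fun i j => Disjoint (pieces i) (pieces j)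

/-- A connected division is complete if the closures of the pieces cover `[0,1]`. -/
def ConnDiv.Complete {n : ℕ} (d : ConnDiv n) : Prop :=
  Set.Icc (0:ℝ) 1 ⊆ ⋃ i, closure (d.pieces i)

/-- Envy-freeness: every player weakly prefers her own piece. -/
def EnvyFree {n : ℕ} (v : Fin n → Measure ℝ) (d : ConnDiv n) : Prop :=
  ∀ i j, v i (d.pieces j) ≤ v i (d.pieces i)

/-- Utilitarian welfare: sum of own-piece values. -/
noncomputable def util {n : ℕ} (v : Fin n → Measure ℝ) (d : ConnDiv n) : ℝ≥0∞ :=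
  ∑ i, v i (d.pieces i)

/-- Egalitarian welfare: minimum own-piece value. -/
noncomputable def egal {n : ℕ} (v : Fin n → Measure ℝ) (d : ConnDiv n) : ℝ≥0∞ :=
  ⨅ i, v i (d.pieces i)

/-- The uniform measure of total mass `m` on the interval `(a,b)`. -/
noncomputable def unifOn (a b m : ℝ) : Measure ℝ :=
  ENNReal.ofReal (m / (b - a)) • volume.restrict (Set.Ioo a b)

/-- Alice's measure: uniform (Lebesgue) on `[0,1]`. -/
noncomputable def vA : Measure ℝ := volume.restrict (Set.Icc (0:ℝ) 1)

/-- Bob's measure: uniform on `[1/2 - δ, 1/2 + δ]`. -/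
noncomputable def vB (δ : ℝ) : Measure ℝ := unifOn (1/2 - δ) (1/2 + δ) 1

lemma vA_Ioo {x y : ℝ} (hx : 0 ≤ x) (hy : y ≤ 1) :
    vA (Set.Ioo x y) = ENNReal.ofReal (y - x) := by
  rw [vA, Measure.restrict_apply measurableSet_Ioo,
    Set.inter_eq_left.mpr (fun z hz => mem_Icc.mpr ⟨hx.trans hz.1.le, hz.2.le.trans hy⟩),
    Real.volume_Ioo]

lemma vB_Ioo (δ x y : ℝ) :
    vB δ (Set.Ioo x y) =
      ENNReal.ofReal (1/(2*δ)) * ENNReal.ofReal (min y (1/2+δ) - max x (1/2-δ)) := by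
  rw [vB, unifOn, Measure.smul_apply, smul_eq_mul,
      Measure.restrict_apply measurableSet_Ioo, Set.Ioo_inter_Ioo, Real.volume_Ioo]
  congr 2
  ring

/-- Endpoints of a nonempty open subinterval of `[0,1]` lie in `[0,1]`. -/
lemma endpoints_mem {a b : ℝ} (hab : a < b) (hs : Set.Ioo a b ⊆ Set.Icc 0 1) :
    0 ≤ a ∧ b ≤ 1 := by
  constructor
  · by_contra h
    push_neg at h
    have h1 : a < min b 0 := lt_min hab h
    have hx : (a + min b 0)/2 ∈ Set.Ioo a b := by
      constructor
      · linarith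
      · have h2 : min b 0 ≤ b := min_le_left _ _
        linarith
    have h3 := (hs hx).1
    have h4 : min b 0 ≤ 0 := min_le_right _ _
    linarith
  · by_contra h
    push_neg at h
    have h1 : max a 1 < b := max_lt hab h
    have hx : (max a 1 + b)/2 ∈ Set.Ioo a b := by
      constructor
      · have h2 : a ≤ max a 1 := le_max_left _ _
        linarith
      · linarith
    have h3 := (hs hx).2
    have h4 : (1:ℝ) ≤ max a 1 := le_max_right _ _
    linarith

/-- Structure lemma, ordered version. -/
lemma struct_ordered {a b a' b' : ℝ} (hab : a < b) (hab' : a' < b')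
    (h0 : 0 ≤ a) (h1 : b ≤ 1) (h0' : 0 ≤ a') (h1' : b' ≤ 1) (hba : b ≤ a')
    (hcov : Set.Icc (0:ℝ) 1 ⊆ Set.Icc a b ∪ Set.Icc a' b') :
    a = 0 ∧ b = a' ∧ b' = 1 := by
  have c0 := hcov (show (0:ℝ) ∈ Set.Icc (0:ℝ) 1 by norm_num)
  have c1 := hcov (show (1:ℝ) ∈ Set.Icc (0:ℝ) 1 by norm_num)
  have ha : a = 0 := by
    rcases c0 with h | h
    · have := h.1; linarith
    · have := h.1; linarith
  have hb' : b' = 1 := by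
    rcases c1 with h | h
    · have := h.2; linarith
    · have := h.2; linarith
  refine ⟨ha, ?_, hb'⟩
  by_contra h
  have hlt : b < a' := lt_of_le_of_ne hba h
  have hx : (b + a')/2 ∈ Set.Icc (0:ℝ) 1 := ⟨by linarith, by linarith⟩
  rcases hcov hx with h | h
  · have := h.2; linarith
  · have := h.1; linarith

/-- The only envy-free complete connected division between Alice and Bob cuts
at the point `1/2` (with either assignment of the halves), and its utilitarian
welfare is exactly `1`. -/
theorem unique_envy_free_cut (δ : ℝ) (hδ : 0 < δ) (hδ' : δ < 1/2)
    (d : ConnDiv 2) (hc : d.Complete) (hEF : EnvyFree ![vA, vB δ] d) :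
    ((d.pieces 0 = Set.Ioo (0:ℝ) (1/2) ∧ d.pieces 1 = Set.Ioo (1/2:ℝ) 1) ∨
     (d.pieces 0 = Set.Ioo (1/2:ℝ) 1 ∧ d.pieces 1 = Set.Ioo (0:ℝ) (1/2))) ∧
    util ![vA, vB δ] d = 1 := by
  obtain ⟨a0, b0, h0⟩ := d.isInterval 0
  obtain ⟨a1, b1, h1⟩ := d.isInterval 1
  have hs0 := d.subset 0; rw [h0] at hs0
  have hs1 := d.subset 1; rw [h1] at hs1
  have hcl0 : closure (Set.Ioo a0 b0) ⊆ Set.Icc a0 b0 :=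
    closure_minimal Set.Ioo_subset_Icc_self isClosed_Icc
  have hcl1 : closure (Set.Ioo a1 b1) ⊆ Set.Icc a1 b1 :=
    closure_minimal Set.Ioo_subset_Icc_self isClosed_Icc
  have hEA := hEF 0 1
  have hEB := hEF 1 0
  simp only [Matrix.cons_val_zero, Matrix.cons_val_one, Matrix.head_cons] at hEA hEB
  -- neither piece can be empty
  have hne0 : a0 < b0 := by
    by_contra h
    push_neg at h
    have he : d.pieces 0 = ∅ := by rw [h0]; exact Set.Ioo_eq_empty (not_lt.mpr h)
    have hc1 : Set.Icc (0:ℝ) 1 ⊆ Set.Icc a1 b1 := by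
      intro x hx
      obtain ⟨i, hi⟩ := Set.mem_iUnion.mp (hc hx)
      rcases (by omega : i = 0 ∨ i = 1) with rfl | rfl
      · rw [he] at hi; simp at hi
      · rw [h1] at hi; exact hcl1 hi
    have c0 := hc1 (show (0:ℝ) ∈ Set.Icc (0:ℝ) 1 by norm_num)
    have c1 := hc1 (show (1:ℝ) ∈ Set.Icc (0:ℝ) 1 by norm_num)
    have hab1 : a1 < b1 := lt_of_le_of_lt c0.1 (lt_of_lt_of_le one_pos c1.2)
    obtain ⟨e1, e2⟩ := endpoints_mem hab1 hs1
    have ha1 : a1 = 0 := le_antisymm c0.1 e1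
    have hb1 : b1 = 1 := le_antisymm e2 c1.2
    rw [he, h1, ha1, hb1, vA_Ioo le_rfl le_rfl] at hEA
    simp at hEA
  have hne1 : a1 < b1 := by
    by_contra h
    push_neg at h
    have he : d.pieces 1 = ∅ := by rw [h1]; exact Set.Ioo_eq_empty (not_lt.mpr h)
    have hc1 : Set.Icc (0:ℝ) 1 ⊆ Set.Icc a0 b0 := by
      intro x hx
      obtain ⟨i, hi⟩ := Set.mem_iUnion.mp (hc hx)
      rcases (by omega : i = 0 ∨ i = 1) with rfl | rfl
      · rw [h0] at hi; exact hcl0 hi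
      · rw [he] at hi; simp at hi
    have c0 := hc1 (show (0:ℝ) ∈ Set.Icc (0:ℝ) 1 by norm_num)
    have c1 := hc1 (show (1:ℝ) ∈ Set.Icc (0:ℝ) 1 by norm_num)
    have hab0 : a0 < b0 := lt_of_le_of_lt c0.1 (lt_of_lt_of_le one_pos c1.2)
    obtain ⟨e1, e2⟩ := endpoints_mem hab0 hs0
    have ha0 : a0 = 0 := le_antisymm c0.1 e1
    have hb0 : b0 = 1 := le_antisymm e2 c1.2
    rw [he, h0, ha0, hb0, vB_Ioo] at hEB
    simp only [measure_empty] at hEB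
    rw [min_eq_right (by linarith), max_eq_right (by linarith)] at hEB
    have hx1 : (1:ℝ)/2 + δ - (1/2 - δ) = 2*δ := by ring
    rw [hx1, ← ENNReal.ofReal_mul (by positivity), one_div,
      inv_mul_cancel₀ (by positivity)] at hEB
    simp at hEB
  obtain ⟨e01, e02⟩ := endpoints_mem hne0 hs0
  obtain ⟨e11, e12⟩ := endpoints_mem hne1 hs1
  have hcov : Set.Icc (0:ℝ) 1 ⊆ Set.Icc a0 b0 ∪ Set.Icc a1 b1 := by
    intro x hx
    obtain ⟨i, hi⟩ := Set.mem_iUnion.mp (hc hx)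
    rcases (by omega : i = 0 ∨ i = 1) with rfl | rfl
    · left; rw [h0] at hi; exact hcl0 hi
    · right; rw [h1] at hi; exact hcl1 hi
  have hdisj : Disjoint (Set.Ioo a0 b0) (Set.Ioo a1 b1) := by
    rw [← h0, ← h1]; exact d.disj (show (0 : Fin 2) ≠ 1 by decide)
  rw [Set.Ioo_disjoint_Ioo] at hdisj
  have horder : b0 ≤ a1 ∨ b1 ≤ a0 := by
    rcases le_total b0 b1 with h | h
    · rw [min_eq_left h] at hdisj
      rcases le_total a0 a1 with h' | h'
      · left; rwa [max_eq_right h'] at hdisj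
      · right; rw [max_eq_left h'] at hdisj; linarith
    · rw [min_eq_right h] at hdisj
      rcases le_total a0 a1 with h' | h'
      · left; rw [max_eq_right h'] at hdisj; linarith
      · right; rwa [max_eq_left h'] at hdisj
  have hl : (0:ℝ) < 1/2 - δ := by linarith
  have hr : (1:ℝ)/2 + δ < 1 := by linarith
  rcases horder with hord | hord
  · -- Alice on the left: pieces 0 = (0,c), pieces 1 = (c,1)
    obtain ⟨ha0, hba, hb1⟩ := struct_ordered hne0 hne1 e01 e02 e11 e12 hord hcov
    subst ha0 hba hb1
    set c := b0 with hcdef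
    have hc0 : 0 < c := hne0
    have hc1 : c < 1 := hne1
    -- Alice's envy-freeness: c ≥ 1/2
    rw [h0, h1, vA_Ioo hc0.le le_rfl, vA_Ioo le_rfl hc1.le] at hEA
    have hAc : 1 - c ≤ c := by
      have := (ENNReal.ofReal_le_ofReal_iff (by linarith)).mp hEA
      linarith
    have hc_half : 1/2 ≤ c := by linarith
    -- Bob's envy-freeness: c ≤ 1/2
    rw [h0, h1, vB_Ioo, vB_Ioo] at hEB
    have hk0 : ENNReal.ofReal (1/(2*δ)) ≠ 0 := by
      simp [ENNReal.ofReal_eq_zero]; positivity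
    have hkt : ENNReal.ofReal (1/(2*δ)) ≠ ⊤ := ENNReal.ofReal_ne_top
    rw [ENNReal.mul_le_mul_iff_right hk0 hkt] at hEB
    rw [max_eq_right hl.le, min_eq_right hr.le, max_eq_left (by linarith : 1/2 - δ ≤ c)] at hEB
    -- hEB : ofReal (min c (1/2+δ) - (1/2-δ)) ≤ ofReal (1/2+δ - c)
    have hm1 : δ ≤ min c (1/2+δ) - (1/2 - δ) := by
      rcases le_total c (1/2+δ) with h | h
      · rw [min_eq_left h]; linarith
      · rw [min_eq_right h]; linarith
    have hmle : min c (1/2+δ) - (1/2 - δ) ≤ 1/2 + δ - c := by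
      by_contra h
      push_neg at h
      have := (ENNReal.ofReal_lt_ofReal_iff (by linarith)).mpr h
      exact absurd hEB (not_le.mpr this)
    have hc_half' : c ≤ 1/2 := by linarith
    have hc_eq : c = 1/2 := le_antisymm hc_half' hc_half
    subst hc_eq
    refine ⟨Or.inl ⟨h0, h1⟩, ?_⟩
    rw [util, Fin.sum_univ_two]
    simp only [Matrix.cons_val_zero, Matrix.cons_val_one, Matrix.head_cons]
    rw [h0, h1, vA_Ioo le_rfl (by norm_num), vB_Ioo]
    rw [min_eq_right hr.le, max_eq_left (by linarith)]
    rw [show (1:ℝ)/2 + δ - 1/2 = δ by ring, ← ENNReal.ofReal_mul (by positivity)]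
    rw [show 1/(2*δ) * δ = 1/2 by field_simp]
    rw [show (1:ℝ)/2 - 0 = 1/2 by ring, ← ENNReal.ofReal_add (by norm_num) (by norm_num)]
    norm_num
  · -- Alice on the right: pieces 1 = (0,c), pieces 0 = (c,1)
    have hcov' : Set.Icc (0:ℝ) 1 ⊆ Set.Icc a1 b1 ∪ Set.Icc a0 b0 := by
      rwa [Set.union_comm]
    obtain ⟨ha1, hab, hb0⟩ := struct_ordered hne1 hne0 e11 e12 e01 e02 hord hcov'
    subst ha1 hab hb0
    set c := b1 with hcdef
    have hc0 : 0 < c := hne1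
    have hc1 : c < 1 := hne0
    -- Alice's envy-freeness: c ≤ 1/2
    rw [h0, h1, vA_Ioo le_rfl hc1.le, vA_Ioo hc0.le le_rfl] at hEA
    have hAc : c ≤ 1 - c := by
      have := (ENNReal.ofReal_le_ofReal_iff (by linarith)).mp hEA
      linarith
    have hc_half : c ≤ 1/2 := by linarith
    -- Bob's envy-freeness: c ≥ 1/2
    rw [h0, h1, vB_Ioo, vB_Ioo] at hEB
    have hk0 : ENNReal.ofReal (1/(2*δ)) ≠ 0 := by
      simp [ENNReal.ofReal_eq_zero]; positivity
    have hkt : ENNReal.ofReal (1/(2*δ)) ≠ ⊤ := ENNReal.ofReal_ne_top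
    rw [ENNReal.mul_le_mul_iff_right hk0 hkt] at hEB
    rw [max_eq_right hl.le, min_eq_right hr.le] at hEB
    -- hEB : ofReal (1/2+δ - max c (1/2-δ)) ≤ ofReal (min c (1/2+δ) - (1/2-δ))
    have hm1 : δ ≤ 1/2 + δ - max c (1/2 - δ) := by
      rcases le_total c (1/2 - δ) with h | h
      · rw [max_eq_right h]; linarith
      · rw [max_eq_left h]; linarith
    have hmle : 1/2 + δ - max c (1/2 - δ) ≤ min c (1/2+δ) - (1/2 - δ) := by
      by_contra h
      push_neg at h
      have := (ENNReal.ofReal_lt_ofReal_iff (by linarith)).mpr h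
      exact absurd hEB (not_le.mpr this)
    have hminc : min c (1/2+δ) ≤ c := min_le_left _ _
    have hmaxc : max c (1/2 - δ) ≤ 1/2 := max_le hc_half (by linarith)
    have hc_half' : 1/2 ≤ c := by linarith
    have hc_eq : c = 1/2 := le_antisymm hc_half hc_half'
    subst hc_eq
    refine ⟨Or.inr ⟨h0, h1⟩, ?_⟩
    rw [util, Fin.sum_univ_two]
    simp only [Matrix.cons_val_zero, Matrix.cons_val_one, Matrix.head_cons]
    rw [h0, h1, vA_Ioo (by norm_num) le_rfl, vB_Ioo]
    rw [min_eq_left (by linarith), max_eq_right (by linarith)]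
    rw [show (1:ℝ)/2 - (1/2 - δ) = δ by ring, ← ENNReal.ofReal_mul (by positivity)]
    rw [show 1/(2*δ) * δ = 1/2 by field_simp]
    rw [show (1:ℝ) - 1/2 = 1/2 by ring, ← ENNReal.ofReal_add (by norm_num) (by norm_num)]
    norm_num
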